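/- Let T₁(z) = e^{2πiα} z (elliptic, α ∉ ℤ) and T₂(z) = z + c (parabolic, c ≠ 0) be Möbius transformations. If σ₁, σ₂, σ₃ are reflections in circles/lines C₁, C₂, C₃ with T₁ = σ₁σ₂ and T₂ = σ₂σ₃, then C₂ is the line through the origin perpendicular to c, i.e., C₂ = {t·ic/|c| : t ∈ ℝ} ∪ {∞}; in particular σ₂ is uniquely determined by T₁ and T₂. -/

import Mathlib

/-- A reflection of the Riemann sphere (written in the chart `ℂ`, with junk
values at the pole of the formula): `z ↦ (a·conj z + b)/(c·conj z − conj a)`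
with `b, c` real and `|a|² + bc = 1`. -/
def IsReflection (σ : ℂ → ℂ) : Prop :=
  ∃ (a : ℂ) (b c : ℝ), ‖a‖ ^ 2 + b * c = 1 ∧
    ∀ z, σ z = (a * starRingEnd ℂ z + b) / (c * starRingEnd ℂ z - starRingEnd ℂ a)

open ComplexConjugate

lemma quad_zero {A B C : ℂ} {S : Set ℂ} (hS : S.Finite)
    (h : ∀ z ∉ S, A * z ^ 2 + B * z + C = 0) : A = 0 ∧ B = 0 ∧ C = 0 := by
  have hall : ∀ z : ℂ, A * z ^ 2 + B * z + C = 0 := by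
    set p : Polynomial ℂ := Polynomial.C A * Polynomial.X ^ 2 + Polynomial.C B * Polynomial.X
        + Polynomial.C C with hp
    have heval : ∀ z : ℂ, p.eval z = A * z ^ 2 + B * z + C := by
      intro z
      simp [hp]
    have hroot : Sᶜ ⊆ {z : ℂ | p.IsRoot z} := by
      intro z hz
      simp only [Set.mem_setOf_eq, Polynomial.IsRoot, heval]
      exact h z hz
    have hp0 : p = 0 := p.eq_zero_of_infinite_isRoot (hS.infinite_compl.mono hroot)
    intro z
    have := congrArg (Polynomial.eval z) hp0
    rw [heval] at this
    simpa using this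
  refine ⟨?_, ?_, ?_⟩
  · linear_combination (hall 1) / 2 + (hall (-1)) / 2 - hall 0
  · linear_combination (hall 1) / 2 - (hall (-1)) / 2
  · linear_combination hall 0

lemma div_div_same (A B q : ℂ) (hq : q ≠ 0) : (A / q) / (B / q) = A / B := by
  rcases eq_or_ne B 0 with h | h
  · simp [h]
  · field_simp

lemma frac_comp (x y u v p q : ℂ) (hq : q ≠ 0) :
    (x * (p / q) + y) / (u * (p / q) - v) = (x * p + y * q) / (u * p - v * q) := by
  have h1 : x * (p / q) + y = (x * p + y * q) / q := by field_simp
  have h2 : u * (p / q) - v = (u * p - v * q) / q := by field_simp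
  rw [h1, h2, div_div_same _ _ _ hq]

lemma norm_cond {a : ℂ} {b c : ℝ} (h : ‖a‖ ^ 2 + b * c = 1) :
    a * conj a + (b : ℂ) * (c : ℂ) = 1 := by
  have h2 : ((‖a‖ ^ 2 + b * c : ℝ) : ℂ) = 1 := by rw [h]; norm_num
  rw [← h2, Complex.mul_conj]
  push_cast [Complex.sq_norm]
  ring

theorem stmt_18 (α : ℝ) (hα : ∀ n : ℤ, α ≠ n) (c : ℂ) (hc : c ≠ 0)
    (σ₁ σ₂ σ₃ : ℂ → ℂ)
    (h₁ : IsReflection σ₁) (h₂ : IsReflection σ₂) (h₃ : IsReflection σ₃)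
    (E : Set ℂ) (hE : E.Finite)
    (hT₁ : ∀ z ∉ E, σ₁ (σ₂ z) = Complex.exp (2 * Real.pi * Complex.I * α) * z)
    (hT₂ : ∀ z ∉ E, σ₂ (σ₃ z) = z + c) :
    ∀ z, σ₂ z = -(c / starRingEnd ℂ c) * starRingEnd ℂ z := by
  obtain ⟨a, b, d, hn2, hs2⟩ := h₂
  obtain ⟨a₁, b₁, c₁, hn1, hs1⟩ := h₁
  obtain ⟨a₃, b₃, c₃, hn3, hs3⟩ := h₃
  have norm2 : a * conj a + (b : ℂ) * (d : ℂ) = 1 := norm_cond hn2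
  have norm1 : a₁ * conj a₁ + (b₁ : ℂ) * (c₁ : ℂ) = 1 := norm_cond hn1
  have norm3 : a₃ * conj a₃ + (b₃ : ℂ) * (c₃ : ℂ) = 1 := norm_cond hn3
  set L : ℂ := Complex.exp (2 * Real.pi * Complex.I * α) with hLdef
  have hL0 : L ≠ 0 := Complex.exp_ne_zero _
  have hL1 : L ≠ 1 := by
    intro h
    rw [hLdef, Complex.exp_eq_one_iff] at h
    obtain ⟨n, hn⟩ := h
    apply hα n
    have h2 : (2 * (Real.pi : ℂ) * Complex.I) ≠ 0 := by
      simp [Real.pi_ne_zero, Complex.I_ne_zero]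
    have h3 : (α : ℂ) * (2 * (Real.pi : ℂ) * Complex.I)
        = (n : ℂ) * (2 * (Real.pi : ℂ) * Complex.I) := by linear_combination hn
    have := mul_right_cancel₀ h2 h3
    exact_mod_cast this
  -- ===== Step A : translation relation σ₂ ∘ σ₃ = (· + c) =====
  set SA : Set ℂ := E ∪ {a₃ / (c₃ : ℂ), -c} with hSA
  have hSAfin : SA.Finite := hE.union ((Set.finite_singleton _).insert _)
  have hq3 : ∀ z ∉ SA, (c₃ : ℂ) * conj z - conj a₃ ≠ 0 := by
    intro z hz h0
    by_cases hc₃ : (c₃ : ℂ) = 0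
    · rw [hc₃, zero_mul, zero_sub, neg_eq_zero] at h0
      have ha₃ : a₃ = 0 := by
        have := congrArg (starRingEnd ℂ) h0
        simpa using this
      rw [ha₃, hc₃] at norm3
      simp at norm3
    · apply hz
      right
      have h4 : conj z = conj a₃ / (c₃ : ℂ) := by
        field_simp at h0 ⊢
        linear_combination h0
      have hz' : z = a₃ / (c₃ : ℂ) := by
        have := congrArg (starRingEnd ℂ) h4
        simpa using this
      exact Or.inl hz'
  have keyA : ∀ z ∉ SA,
      (((d : ℂ) * conj a₃ - conj a * (c₃ : ℂ)) * z + ((d : ℂ) * (b₃ : ℂ) + conj a * a₃) ≠ 0) ∧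
      (a * conj a₃ + (b : ℂ) * (c₃ : ℂ)) * z + (a * (b₃ : ℂ) - (b : ℂ) * a₃)
        = (z + c) * (((d : ℂ) * conj a₃ - conj a * (c₃ : ℂ)) * z
            + ((d : ℂ) * (b₃ : ℂ) + conj a * a₃)) := by
    intro z hz
    have hzE : z ∉ E := fun h => hz (Or.inl h)
    have h1 := hT₂ z hzE
    rw [hs3 z, hs2] at h1
    have hq := hq3 z hz
    have hqc : (c₃ : ℂ) * z - a₃ ≠ 0 := by
      intro h
      apply hq
      have := congrArg (starRingEnd ℂ) h
      simpa [map_sub, map_mul, Complex.conj_ofReal] using this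
    rw [show conj ((a₃ * conj z + (b₃ : ℂ)) / ((c₃ : ℂ) * conj z - conj a₃))
        = (conj a₃ * z + (b₃ : ℂ)) / ((c₃ : ℂ) * z - a₃) by
      simp [map_div₀, map_sub, map_add, map_mul, Complex.conj_ofReal]] at h1
    rw [frac_comp _ _ _ _ _ _ hqc] at h1
    have hDen : (d : ℂ) * (conj a₃ * z + (b₃ : ℂ)) - conj a * ((c₃ : ℂ) * z - a₃) ≠ 0 := by
      intro h
      rw [h, div_zero] at h1
      apply hz
      right
      right
      have : z = -c := by linear_combination -h1
      simp [this]
    constructor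
    · intro h
      apply hDen
      linear_combination h
    · rw [div_eq_iff hDen] at h1
      linear_combination h1
  have hquadA : ∀ z ∉ SA,
      ((d : ℂ) * conj a₃ - conj a * (c₃ : ℂ)) * z ^ 2
      + (((d : ℂ) * (b₃ : ℂ) + conj a * a₃) + c * ((d : ℂ) * conj a₃ - conj a * (c₃ : ℂ))
          - (a * conj a₃ + (b : ℂ) * (c₃ : ℂ))) * z
      + (c * ((d : ℂ) * (b₃ : ℂ) + conj a * a₃) - (a * (b₃ : ℂ) - (b : ℂ) * a₃)) = 0 := by
    intro z hz
    linear_combination -(keyA z hz).2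
  obtain ⟨e1, e2, e3⟩ := quad_zero hSAfin hquadA
  have f1 : (d : ℂ) * conj a₃ = conj a * (c₃ : ℂ) := by linear_combination e1
  have f2 : a * conj a₃ + (b : ℂ) * (c₃ : ℂ) = (d : ℂ) * (b₃ : ℂ) + conj a * a₃ := by
    linear_combination -e2 + c * e1
  have f3 : a * (b₃ : ℂ) - (b : ℂ) * a₃ = c * ((d : ℂ) * (b₃ : ℂ) + conj a * a₃) := by
    linear_combination -e3
  have f1' : (d : ℂ) * a₃ = a * (c₃ : ℂ) := by
    have := congrArg (starRingEnd ℂ) f1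
    simpa [map_mul, Complex.conj_ofReal] using this
  have hd₀ne : (d : ℂ) * (b₃ : ℂ) + conj a * a₃ ≠ 0 := by
    obtain ⟨z, hz⟩ := hSAfin.infinite_compl.nonempty
    have h := (keyA z hz).1
    intro h0
    apply h
    rw [e1, h0]
    ring
  -- d = 0
  have hd : (d : ℂ) = 0 := by
    by_contra hd
    have g1 : (c₃ : ℂ) = (d : ℂ) * ((d : ℂ) * (b₃ : ℂ) + conj a * a₃) := by
      linear_combination (d : ℂ) * f2 - a * f1 - (c₃ : ℂ) * norm2
    have g2 : (b₃ : ℂ) = ((d : ℂ) * (b₃ : ℂ) + conj a * a₃) * (b : ℂ) := by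
      apply mul_left_cancel₀ (mul_ne_zero hd hd)
      linear_combination (-conj a) * f1' + (-(conj a * a)) * g1
        - (d : ℂ) * ((d : ℂ) * (b₃ : ℂ) + conj a * a₃) * norm2
    have g3 : a₃ = ((d : ℂ) * (b₃ : ℂ) + conj a * a₃) * a := by
      apply mul_left_cancel₀ hd
      linear_combination f1' + a * g1
    have hcd : c * ((d : ℂ) * (b₃ : ℂ) + conj a * a₃) = 0 := by
      linear_combination -f3 + a * g2 - (b : ℂ) * g3
    exact hc ((mul_eq_zero.mp hcd).resolve_right hd₀ne)
  -- consequences of d = 0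
  have norm2' : a * conj a = 1 := by
    have := norm2
    rw [hd] at this
    simpa using this
  have ha0 : a ≠ 0 := by
    intro h
    rw [h] at norm2'
    simp at norm2'
  have hca : conj a ≠ 0 := by
    intro h
    apply ha0
    have := congrArg (starRingEnd ℂ) h
    simpa using this
  have hc₃0 : (c₃ : ℂ) = 0 := by
    have h : conj a * (c₃ : ℂ) = 0 := by rw [← f1, hd]; ring
    exact (mul_eq_zero.mp h).resolve_left hca
  have ha₃0 : a₃ ≠ 0 := by
    intro h
    rw [h, hc₃0] at norm3
    simp at norm3
  have hdag : a * conj a₃ = conj a * a₃ := by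
    have := f2
    rw [hd, hc₃0] at this
    simpa using this
  have r3 : a * (b₃ : ℂ) - (b : ℂ) * a₃ = c * (conj a * a₃) := by
    have := f3
    rw [hd] at this
    simpa using this
  -- ===== Step B : rotation relation σ₁ ∘ σ₂ = (L * ·) =====
  set SB : Set ℂ := E ∪ {0} with hSB
  have hSBfin : SB.Finite := hE.union (Set.finite_singleton 0)
  have keyB : ∀ z ∉ SB,
      ((c₁ : ℂ) * (conj a * z + (b : ℂ)) - conj a₁ * (-a) ≠ 0) ∧
      a₁ * (conj a * z + (b : ℂ)) + (b₁ : ℂ) * (-a)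
        = L * z * ((c₁ : ℂ) * (conj a * z + (b : ℂ)) - conj a₁ * (-a)) := by
    intro z hz
    have hzE : z ∉ E := fun h => hz (Or.inl h)
    have h1 := hT₁ z hzE
    rw [hs1 (σ₂ z)] at h1
    have hσ2z : conj (σ₂ z) = (conj a * z + (b : ℂ)) / (-a) := by
      rw [hs2 z, hd]
      rw [show ((0 : ℂ) * conj z - conj a) = -conj a from by ring]
      simp [map_div₀, map_add, map_mul, map_neg, Complex.conj_ofReal]
    rw [hσ2z] at h1
    rw [show (conj a * z + (b : ℂ)) / (-a) = ((conj a * z + (b : ℂ)) / (-a)) from rfl] at h1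
    rw [show a₁ * ((conj a * z + (b : ℂ)) / (-a)) + (b₁ : ℂ)
        = a₁ * (((conj a * z + (b : ℂ))) / (-a)) + (b₁ : ℂ) from rfl] at h1
    rw [frac_comp _ _ _ _ _ _ (neg_ne_zero.mpr ha0)] at h1
    have hDen : (c₁ : ℂ) * (conj a * z + (b : ℂ)) - conj a₁ * (-a) ≠ 0 := by
      intro h
      rw [h, div_zero] at h1
      have hz0 : z = 0 := by
        rcases mul_eq_zero.mp h1.symm with h' | h'
        · exact absurd h' hL0
        · exact h'
      exact hz (Or.inr (by simp [hz0]))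
    refine ⟨hDen, ?_⟩
    rw [div_eq_iff hDen] at h1
    linear_combination h1
  have hquadB : ∀ z ∉ SB,
      (L * (c₁ : ℂ) * conj a) * z ^ 2
      + (L * ((c₁ : ℂ) * (b : ℂ) + conj a₁ * a) - a₁ * conj a) * z
      + ((b₁ : ℂ) * a - a₁ * (b : ℂ)) = 0 := by
    intro z hz
    linear_combination -(keyB z hz).2
  obtain ⟨s1, s2, s3⟩ := quad_zero hSBfin hquadB
  have hc₁0 : (c₁ : ℂ) = 0 := by
    rcases mul_eq_zero.mp s1 with h | h
    · rcases mul_eq_zero.mp h with h' | h'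
      · exact absurd h' hL0
      · exact h'
    · exact absurd h hca
  have norm1' : a₁ * conj a₁ = 1 := by
    rw [hc₁0] at norm1
    simpa using norm1
  have ha₁0 : a₁ ≠ 0 := by
    intro h
    rw [h] at norm1'
    simp at norm1'
  have hca₁ : conj a₁ ≠ 0 := by
    intro h
    apply ha₁0
    have := congrArg (starRingEnd ℂ) h
    simpa using this
  have s2' : L * (conj a₁ * a) = a₁ * conj a := by
    linear_combination s2 - L * (b : ℂ) * hc₁0
  have s3' : a₁ * (b : ℂ) = (b₁ : ℂ) * a := by linear_combination -s3
  have s3c : conj a₁ * (b : ℂ) = (b₁ : ℂ) * conj a := by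
    have := congrArg (starRingEnd ℂ) s3'
    simpa [map_mul, Complex.conj_ofReal] using this
  have hb0 : (b : ℂ) = 0 := by
    have t1 : a₁ * conj a * (b : ℂ) = (b₁ : ℂ) := by
      linear_combination conj a * s3' + (b₁ : ℂ) * norm2'
    have t2 : conj a₁ * a * (b : ℂ) = (b₁ : ℂ) := by
      linear_combination a * s3c + (b₁ : ℂ) * norm2'
    have t3 : (L - 1) * (conj a₁ * a * (b : ℂ)) = 0 := by
      linear_combination (b : ℂ) * s2' + t1 - t2
    have t4 : conj a₁ * a * (b : ℂ) = 0 := by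
      rcases mul_eq_zero.mp t3 with h | h
      · exact absurd (by linear_combination h : L = 1) hL1
      · exact h
    rcases mul_eq_zero.mp t4 with h | h
    · rcases mul_eq_zero.mp h with h' | h'
      · exact absurd h' hca₁
      · exact absurd h' ha0
    · exact h
  -- ===== conclusion =====
  have r3' : a * (b₃ : ℂ) = c * (conj a * a₃) := by
    linear_combination r3 + a₃ * hb0
  have hb₃ : (b₃ : ℂ) = conj c * a₃ := by
    apply mul_left_cancel₀ hca
    have hr := congrArg (starRingEnd ℂ) r3'
    simp only [map_mul, Complex.conj_ofReal, Complex.conj_conj] at hr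
    linear_combination hr + conj c * hdag
  have hkey : a * conj c = c * conj a := by
    apply mul_right_cancel₀ ha₃0
    have := r3'
    rw [hb₃] at this
    linear_combination this
  have hcc : conj c ≠ 0 := by
    intro h
    apply hc
    have := congrArg (starRingEnd ℂ) h
    simpa using this
  intro z
  rw [hs2 z, hd, hb0]
  rw [show ((0 : ℂ) * conj z - conj a) = -conj a from by ring]
  field_simp [hca, hcc]
  linear_combination (-conj z) * hkey
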